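/- With R_{j;m+1} as defined above, R_{j;m+1}(τ, v) = −R_{2m+2−j;m+1}(τ, −v) for all j ∈ ℤ, τ with Im τ > 0, and v ∈ ℂ. -/
import Mathlib


noncomputable section

open Complex

/-- Zwegers-type error function `E(x) = 2∫₀ˣ e^{−πu²} du`. -/
def Efun (x : ℝ) : ℝ := 2 * ∫ u in (0 : ℝ)..x, Real.exp (-Real.pi * u ^ 2)

/-- The modified Zwegers function `R_{j;m+1}(τ,v)`: the sum over `n ≡ −j mod 2(m+1)`,
parametrized by `n = −j + 2(m+1)k`, `k ∈ ℤ`. -/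
def Rz (m : ℕ) (j : ℤ) (τ v : ℂ) : ℂ :=
  ∑' k : ℤ,
    (((Real.sign (((-j + 2 * ((m : ℤ) + 1) * k : ℤ) : ℝ) + 1 / 2 + (j : ℝ) - 2 * ((m : ℝ) + 1)) -
        Efun ((((-j + 2 * ((m : ℤ) + 1) * k : ℤ) : ℝ) + 2 * ((m : ℝ) + 1) * (v.im / τ.im)) *
          Real.sqrt (τ.im / ((m : ℝ) + 1)))) : ℝ) : ℂ) *
      Complex.exp (-(Real.pi : ℂ) * I * ((-j + 2 * ((m : ℤ) + 1) * k : ℤ) : ℂ) ^ 2 * τ /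
          (2 * ((m : ℂ) + 1)) -
        2 * (Real.pi : ℂ) * I * ((-j + 2 * ((m : ℤ) + 1) * k : ℤ) : ℂ) * v)

lemma Efun_neg (x : ℝ) : Efun (-x) = -Efun x := by
  unfold Efun
  rw [← mul_neg]
  congr 1
  have h := intervalIntegral.integral_comp_neg (a := (0:ℝ)) (b := x)
      (fun u => Real.exp (-Real.pi * u ^ 2))
  simp only [neg_zero, neg_sq] at h
  rw [intervalIntegral.integral_symm (-x) 0, ← h]

lemma sign_aux (m : ℕ) (t : ℤ) :
    Real.sign (2 * ((m : ℝ) + 1) * (t : ℝ) + 1 / 2) = if 0 ≤ t then 1 else -1 := by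
  have hm : (0:ℝ) ≤ (m:ℝ) := Nat.cast_nonneg m
  split_ifs with h
  · apply Real.sign_of_pos
    have : (0:ℝ) ≤ (t:ℝ) := by exact_mod_cast h
    nlinarith
  · apply Real.sign_of_neg
    have ht : (t:ℝ) ≤ -1 := by exact_mod_cast (by omega : t ≤ -1)
    nlinarith

/-- `R_{j;m+1}(τ, v) = −R_{2m+2−j;m+1}(τ, −v)`. -/
theorem stmt6 (m : ℕ) (j : ℤ) (τ v : ℂ) (hτ : 0 < τ.im) :
    Rz m j τ v = -Rz m (2 * (m : ℤ) + 2 - j) τ (-v) := by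
  unfold Rz
  rw [← Equiv.tsum_eq (Equiv.subLeft (1:ℤ)), ← tsum_neg]
  apply tsum_congr
  intro k
  simp only [Equiv.subLeft_apply, Complex.neg_im]
  have hn : (-(2 * (m:ℤ) + 2 - j) + 2 * ((m:ℤ) + 1) * k : ℤ)
      = -(-j + 2 * ((m:ℤ) + 1) * (1 - k)) := by ring
  rw [hn]
  set n : ℤ := -j + 2 * ((m:ℤ) + 1) * (1 - k) with hndef
  -- sign arguments
  have hs1 : ((n : ℝ) + 1 / 2 + (j : ℝ) - 2 * ((m : ℝ) + 1))
      = 2 * ((m : ℝ) + 1) * ((-k : ℤ) : ℝ) + 1 / 2 := by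
    rw [hndef]; push_cast; ring
  have hs2 : (((-n : ℤ) : ℝ) + 1 / 2 + ((2 * (m:ℤ) + 2 - j : ℤ) : ℝ) - 2 * ((m : ℝ) + 1))
      = 2 * ((m : ℝ) + 1) * ((k - 1 : ℤ) : ℝ) + 1 / 2 := by
    rw [hndef]; push_cast; ring
  -- E arguments
  have hE : ((((-n : ℤ) : ℝ) + 2 * ((m : ℝ) + 1) * (-v.im / τ.im)) *
        Real.sqrt (τ.im / ((m : ℝ) + 1)))
      = -(((n : ℝ) + 2 * ((m : ℝ) + 1) * (v.im / τ.im)) * Real.sqrt (τ.im / ((m : ℝ) + 1))) := by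
    push_cast; ring
  -- exponential arguments
  have hexp : (-(Real.pi : ℂ) * I * (((-n : ℤ) : ℂ)) ^ 2 * τ / (2 * ((m : ℂ) + 1)) -
        2 * (Real.pi : ℂ) * I * (((-n : ℤ) : ℂ)) * (-v))
      = (-(Real.pi : ℂ) * I * ((n : ℤ) : ℂ) ^ 2 * τ / (2 * ((m : ℂ) + 1)) -
        2 * (Real.pi : ℂ) * I * ((n : ℤ) : ℂ) * v) := by
    push_cast; ring
  rw [hs2, hE, hexp, Efun_neg]
  have hsgn : Real.sign ((n : ℝ) + 1 / 2 + (j : ℝ) - 2 * ((m : ℝ) + 1))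
      = -Real.sign (2 * ((m : ℝ) + 1) * ((k - 1 : ℤ) : ℝ) + 1 / 2) := by
    rw [hs1, sign_aux, sign_aux]
    split_ifs with h1 h2 h2
    · exfalso; omega
    · norm_num
    · norm_num
    · exfalso; omega
  rw [hsgn]
  push_cast
  ring
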